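/- Every polyomino in ℤ² of size at least 2 can be tiled by the set S₂ = {domino, straight tromino, L-tromino, T-tetromino, plus-pentomino} with rotations allowed. -/

import Mathlib

/-- Edge-adjacency of cells in `ℤ²`. -/
def Adj (a b : ℤ × ℤ) : Prop := (a.1 - b.1).natAbs + (a.2 - b.2).natAbs = 1

/-- A finset of cells is connected (via edge-adjacency). -/
def Conn (R : Finset (ℤ × ℤ)) : Prop :=
  ∀ a ∈ R, ∀ b ∈ R, Relation.ReflTransGen (fun x y => x ∈ R ∧ y ∈ R ∧ Adj x y) a b

/-- Rotation of the plane by 90 degrees. -/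
def rot (p : ℤ × ℤ) : ℤ × ℤ := (-p.2, p.1)

/-- The placement of tile `t` rotated by `k` quarter-turns and translated by `v`. -/
def placeR (t : Finset (ℤ × ℤ)) (k : ℕ) (v : ℤ × ℤ) : Finset (ℤ × ℤ) :=
  (t.image (rot^[k])).image (· + v)

/-- `l` is a tiling of `R` by translates of rotations of tiles in `S`:
the pieces are placements of tiles of `S`, are pairwise disjoint, and their union is `R`. -/
def IsTilingR (S : Set (Finset (ℤ × ℤ))) (R : Finset (ℤ × ℤ))
    (l : List (Finset (ℤ × ℤ))) : Prop :=
  (∀ p ∈ l, ∃ t ∈ S, ∃ k < 4, ∃ v, p = placeR t k v) ∧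
  l.Pairwise Disjoint ∧ l.foldr (· ∪ ·) ∅ = R

/-- `R` is tileable by translates of rotations of tiles in `S`. -/
def TileableR (S : Set (Finset (ℤ × ℤ))) (R : Finset (ℤ × ℤ)) : Prop :=
  ∃ l, IsTilingR S R l

/-- The domino. -/
def D2 : Finset (ℤ × ℤ) := {(0, 0), (1, 0)}
/-- The straight tromino (3-bar). -/
def I3 : Finset (ℤ × ℤ) := {(0, 0), (1, 0), (2, 0)}
/-- The L-tromino. -/
def L3 : Finset (ℤ × ℤ) := {(0, 0), (1, 0), (0, 1)}
/-- The T-tetromino. -/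
def T4 : Finset (ℤ × ℤ) := {(0, 0), (1, 0), (2, 0), (1, 1)}
/-- The plus-pentomino. -/
def P5 : Finset (ℤ × ℤ) := {(1, 0), (0, 1), (1, 1), (2, 1), (1, 2)}

/-- The fountain set `S₂`. -/
def S2 : Set (Finset (ℤ × ℤ)) := {D2, I3, L3, T4, P5}

lemma adj_symm {a b : ℤ × ℤ} (h : Adj a b) : Adj b a := by
  unfold Adj at *; omega

lemma adj_cases {x c : ℤ × ℤ} (h : Adj x c) :
    x = c + ((1 : ℤ),(0 : ℤ)) ∨ x = c + ((-1 : ℤ),(0 : ℤ)) ∨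
      x = c + ((0 : ℤ),(1 : ℤ)) ∨ x = c + ((0 : ℤ),(-1 : ℤ)) := by
  obtain ⟨x1,x2⟩ := x; obtain ⟨c1,c2⟩ := c
  unfold Adj at h
  simp [Prod.ext_iff] at *
  omega


set_option maxHeartbeats 4000000 in
lemma center_tile (c : ℤ × ℤ) (N : Finset (ℤ × ℤ)) (hN : ∀ x ∈ N, Adj x c)
    (hne : N.Nonempty) :
    ∃ t ∈ S2, ∃ k < 4, ∃ v, insert c N = placeR t k v := by
  by_cases h1 : c + ((1 : ℤ),(0 : ℤ)) ∈ N <;> by_cases h2 : c + ((-1 : ℤ),(0 : ℤ)) ∈ N <;>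
    by_cases h3 : c + ((0 : ℤ),(1 : ℤ)) ∈ N <;> by_cases h4 : c + ((0 : ℤ),(-1 : ℤ)) ∈ N
  · refine ⟨P5, by simp [S2], 0, by norm_num, c + ((-1 : ℤ),(-1 : ℤ)), ?_⟩
    have he : insert c N = insert c ({c + ((1,0) : ℤ × ℤ), c + ((-1,0) : ℤ × ℤ), c + ((0,1) : ℤ × ℤ), c + ((0,-1) : ℤ × ℤ)} : Finset (ℤ × ℤ)) := by
      ext x
      simp only [Finset.mem_insert, Finset.mem_singleton]
      constructor
      · rintro (rfl | hx)
        · exact Or.inl rfl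
        · rcases adj_cases (hN x hx) with rfl | rfl | rfl | rfl
          · simp
          · simp
          · simp
          · simp
      · rintro (rfl | rfl | rfl | rfl | rfl)
        · exact Or.inl rfl
        · exact Or.inr h1
        · exact Or.inr h2
        · exact Or.inr h3
        · exact Or.inr h4
    rw [he]
    ext x
    simp [placeR, D2, I3, L3, T4, P5, rot, Prod.ext_iff]
    all_goals omega
  · refine ⟨T4, by simp [S2], 0, by norm_num, c + ((-1 : ℤ),(0 : ℤ)), ?_⟩
    have he : insert c N = insert c ({c + ((1,0) : ℤ × ℤ), c + ((-1,0) : ℤ × ℤ), c + ((0,1) : ℤ × ℤ)} : Finset (ℤ × ℤ)) := by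
      ext x
      simp only [Finset.mem_insert, Finset.mem_singleton]
      constructor
      · rintro (rfl | hx)
        · exact Or.inl rfl
        · rcases adj_cases (hN x hx) with rfl | rfl | rfl | rfl
          · simp
          · simp
          · simp
          · exact absurd hx h4
      · rintro (rfl | rfl | rfl | rfl)
        · exact Or.inl rfl
        · exact Or.inr h1
        · exact Or.inr h2
        · exact Or.inr h3
    rw [he]
    ext x
    simp [placeR, D2, I3, L3, T4, P5, rot, Prod.ext_iff]
    all_goals omega
  · refine ⟨T4, by simp [S2], 2, by norm_num, c + ((1 : ℤ),(0 : ℤ)), ?_⟩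
    have he : insert c N = insert c ({c + ((1,0) : ℤ × ℤ), c + ((-1,0) : ℤ × ℤ), c + ((0,-1) : ℤ × ℤ)} : Finset (ℤ × ℤ)) := by
      ext x
      simp only [Finset.mem_insert, Finset.mem_singleton]
      constructor
      · rintro (rfl | hx)
        · exact Or.inl rfl
        · rcases adj_cases (hN x hx) with rfl | rfl | rfl | rfl
          · simp
          · simp
          · exact absurd hx h3
          · simp
      · rintro (rfl | rfl | rfl | rfl)
        · exact Or.inl rfl
        · exact Or.inr h1
        · exact Or.inr h2
        · exact Or.inr h4
    rw [he]
    ext x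
    simp [placeR, D2, I3, L3, T4, P5, rot, Prod.ext_iff]
    all_goals omega
  · refine ⟨I3, by simp [S2], 0, by norm_num, c + ((-1 : ℤ),(0 : ℤ)), ?_⟩
    have he : insert c N = insert c ({c + ((1,0) : ℤ × ℤ), c + ((-1,0) : ℤ × ℤ)} : Finset (ℤ × ℤ)) := by
      ext x
      simp only [Finset.mem_insert, Finset.mem_singleton]
      constructor
      · rintro (rfl | hx)
        · exact Or.inl rfl
        · rcases adj_cases (hN x hx) with rfl | rfl | rfl | rfl
          · simp
          · simp
          · exact absurd hx h3
          · exact absurd hx h4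
      · rintro (rfl | rfl | rfl)
        · exact Or.inl rfl
        · exact Or.inr h1
        · exact Or.inr h2
    rw [he]
    ext x
    simp [placeR, D2, I3, L3, T4, P5, rot, Prod.ext_iff]
    all_goals omega
  · refine ⟨T4, by simp [S2], 3, by norm_num, c + ((0 : ℤ),(1 : ℤ)), ?_⟩
    have he : insert c N = insert c ({c + ((1,0) : ℤ × ℤ), c + ((0,1) : ℤ × ℤ), c + ((0,-1) : ℤ × ℤ)} : Finset (ℤ × ℤ)) := by
      ext x
      simp only [Finset.mem_insert, Finset.mem_singleton]
      constructor
      · rintro (rfl | hx)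
        · exact Or.inl rfl
        · rcases adj_cases (hN x hx) with rfl | rfl | rfl | rfl
          · simp
          · exact absurd hx h2
          · simp
          · simp
      · rintro (rfl | rfl | rfl | rfl)
        · exact Or.inl rfl
        · exact Or.inr h1
        · exact Or.inr h3
        · exact Or.inr h4
    rw [he]
    ext x
    simp [placeR, D2, I3, L3, T4, P5, rot, Prod.ext_iff]
    all_goals omega
  · refine ⟨L3, by simp [S2], 0, by norm_num, c, ?_⟩
    have he : insert c N = insert c ({c + ((1,0) : ℤ × ℤ), c + ((0,1) : ℤ × ℤ)} : Finset (ℤ × ℤ)) := by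
      ext x
      simp only [Finset.mem_insert, Finset.mem_singleton]
      constructor
      · rintro (rfl | hx)
        · exact Or.inl rfl
        · rcases adj_cases (hN x hx) with rfl | rfl | rfl | rfl
          · simp
          · exact absurd hx h2
          · simp
          · exact absurd hx h4
      · rintro (rfl | rfl | rfl)
        · exact Or.inl rfl
        · exact Or.inr h1
        · exact Or.inr h3
    rw [he]
    ext x
    simp [placeR, D2, I3, L3, T4, P5, rot, Prod.ext_iff]
    all_goals omega
  · refine ⟨L3, by simp [S2], 3, by norm_num, c, ?_⟩
    have he : insert c N = insert c ({c + ((1,0) : ℤ × ℤ), c + ((0,-1) : ℤ × ℤ)} : Finset (ℤ × ℤ)) := by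
      ext x
      simp only [Finset.mem_insert, Finset.mem_singleton]
      constructor
      · rintro (rfl | hx)
        · exact Or.inl rfl
        · rcases adj_cases (hN x hx) with rfl | rfl | rfl | rfl
          · simp
          · exact absurd hx h2
          · exact absurd hx h3
          · simp
      · rintro (rfl | rfl | rfl)
        · exact Or.inl rfl
        · exact Or.inr h1
        · exact Or.inr h4
    rw [he]
    ext x
    simp [placeR, D2, I3, L3, T4, P5, rot, Prod.ext_iff]
    all_goals omega
  · refine ⟨D2, by simp [S2], 0, by norm_num, c, ?_⟩
    have he : insert c N = insert c ({c + ((1,0) : ℤ × ℤ)} : Finset (ℤ × ℤ)) := by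
      ext x
      simp only [Finset.mem_insert, Finset.mem_singleton]
      constructor
      · rintro (rfl | hx)
        · exact Or.inl rfl
        · rcases adj_cases (hN x hx) with rfl | rfl | rfl | rfl
          · simp
          · exact absurd hx h2
          · exact absurd hx h3
          · exact absurd hx h4
      · rintro (rfl | rfl)
        · exact Or.inl rfl
        · exact Or.inr h1
    rw [he]
    ext x
    simp [placeR, D2, I3, L3, T4, P5, rot, Prod.ext_iff]
    all_goals omega
  · refine ⟨T4, by simp [S2], 1, by norm_num, c + ((0 : ℤ),(-1 : ℤ)), ?_⟩
    have he : insert c N = insert c ({c + ((-1,0) : ℤ × ℤ), c + ((0,1) : ℤ × ℤ), c + ((0,-1) : ℤ × ℤ)} : Finset (ℤ × ℤ)) := by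
      ext x
      simp only [Finset.mem_insert, Finset.mem_singleton]
      constructor
      · rintro (rfl | hx)
        · exact Or.inl rfl
        · rcases adj_cases (hN x hx) with rfl | rfl | rfl | rfl
          · exact absurd hx h1
          · simp
          · simp
          · simp
      · rintro (rfl | rfl | rfl | rfl)
        · exact Or.inl rfl
        · exact Or.inr h2
        · exact Or.inr h3
        · exact Or.inr h4
    rw [he]
    ext x
    simp [placeR, D2, I3, L3, T4, P5, rot, Prod.ext_iff]
    all_goals omega
  · refine ⟨L3, by simp [S2], 1, by norm_num, c, ?_⟩
    have he : insert c N = insert c ({c + ((-1,0) : ℤ × ℤ), c + ((0,1) : ℤ × ℤ)} : Finset (ℤ × ℤ)) := by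
      ext x
      simp only [Finset.mem_insert, Finset.mem_singleton]
      constructor
      · rintro (rfl | hx)
        · exact Or.inl rfl
        · rcases adj_cases (hN x hx) with rfl | rfl | rfl | rfl
          · exact absurd hx h1
          · simp
          · simp
          · exact absurd hx h4
      · rintro (rfl | rfl | rfl)
        · exact Or.inl rfl
        · exact Or.inr h2
        · exact Or.inr h3
    rw [he]
    ext x
    simp [placeR, D2, I3, L3, T4, P5, rot, Prod.ext_iff]
    all_goals omega
  · refine ⟨L3, by simp [S2], 2, by norm_num, c, ?_⟩
    have he : insert c N = insert c ({c + ((-1,0) : ℤ × ℤ), c + ((0,-1) : ℤ × ℤ)} : Finset (ℤ × ℤ)) := by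
      ext x
      simp only [Finset.mem_insert, Finset.mem_singleton]
      constructor
      · rintro (rfl | hx)
        · exact Or.inl rfl
        · rcases adj_cases (hN x hx) with rfl | rfl | rfl | rfl
          · exact absurd hx h1
          · simp
          · exact absurd hx h3
          · simp
      · rintro (rfl | rfl | rfl)
        · exact Or.inl rfl
        · exact Or.inr h2
        · exact Or.inr h4
    rw [he]
    ext x
    simp [placeR, D2, I3, L3, T4, P5, rot, Prod.ext_iff]
    all_goals omega
  · refine ⟨D2, by simp [S2], 0, by norm_num, c + ((-1 : ℤ),(0 : ℤ)), ?_⟩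
    have he : insert c N = insert c ({c + ((-1,0) : ℤ × ℤ)} : Finset (ℤ × ℤ)) := by
      ext x
      simp only [Finset.mem_insert, Finset.mem_singleton]
      constructor
      · rintro (rfl | hx)
        · exact Or.inl rfl
        · rcases adj_cases (hN x hx) with rfl | rfl | rfl | rfl
          · exact absurd hx h1
          · simp
          · exact absurd hx h3
          · exact absurd hx h4
      · rintro (rfl | rfl)
        · exact Or.inl rfl
        · exact Or.inr h2
    rw [he]
    ext x
    simp [placeR, D2, I3, L3, T4, P5, rot, Prod.ext_iff]
    all_goals omega
  · refine ⟨I3, by simp [S2], 1, by norm_num, c + ((0 : ℤ),(-1 : ℤ)), ?_⟩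
    have he : insert c N = insert c ({c + ((0,1) : ℤ × ℤ), c + ((0,-1) : ℤ × ℤ)} : Finset (ℤ × ℤ)) := by
      ext x
      simp only [Finset.mem_insert, Finset.mem_singleton]
      constructor
      · rintro (rfl | hx)
        · exact Or.inl rfl
        · rcases adj_cases (hN x hx) with rfl | rfl | rfl | rfl
          · exact absurd hx h1
          · exact absurd hx h2
          · simp
          · simp
      · rintro (rfl | rfl | rfl)
        · exact Or.inl rfl
        · exact Or.inr h3
        · exact Or.inr h4
    rw [he]
    ext x
    simp [placeR, D2, I3, L3, T4, P5, rot, Prod.ext_iff]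
    all_goals omega
  · refine ⟨D2, by simp [S2], 1, by norm_num, c, ?_⟩
    have he : insert c N = insert c ({c + ((0,1) : ℤ × ℤ)} : Finset (ℤ × ℤ)) := by
      ext x
      simp only [Finset.mem_insert, Finset.mem_singleton]
      constructor
      · rintro (rfl | hx)
        · exact Or.inl rfl
        · rcases adj_cases (hN x hx) with rfl | rfl | rfl | rfl
          · exact absurd hx h1
          · exact absurd hx h2
          · simp
          · exact absurd hx h4
      · rintro (rfl | rfl)
        · exact Or.inl rfl
        · exact Or.inr h3
    rw [he]
    ext x
    simp [placeR, D2, I3, L3, T4, P5, rot, Prod.ext_iff]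
    all_goals omega
  · refine ⟨D2, by simp [S2], 1, by norm_num, c + ((0 : ℤ),(-1 : ℤ)), ?_⟩
    have he : insert c N = insert c ({c + ((0,-1) : ℤ × ℤ)} : Finset (ℤ × ℤ)) := by
      ext x
      simp only [Finset.mem_insert, Finset.mem_singleton]
      constructor
      · rintro (rfl | hx)
        · exact Or.inl rfl
        · rcases adj_cases (hN x hx) with rfl | rfl | rfl | rfl
          · exact absurd hx h1
          · exact absurd hx h2
          · exact absurd hx h3
          · simp
      · rintro (rfl | rfl)
        · exact Or.inl rfl
        · exact Or.inr h4
    rw [he]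
    ext x
    simp [placeR, D2, I3, L3, T4, P5, rot, Prod.ext_iff]
    all_goals omega
  · exfalso
    obtain ⟨x, hx⟩ := hne
    rcases adj_cases (hN x hx) with rfl | rfl | rfl | rfl
    · exact h1 hx
    · exact h2 hx
    · exact h3 hx
    · exact h4 hx

/-- `near R r n u`: there is a walk of length `n` from `u` to `r` staying in `R`
(except possibly the start). -/
def near (R : Finset (ℤ × ℤ)) (r : ℤ × ℤ) : ℕ → (ℤ × ℤ) → Prop
  | 0, u => u = r
  | n+1, u => ∃ q ∈ R, Adj u q ∧ near R r n q

noncomputable def dst (R : Finset (ℤ × ℤ)) (r u : ℤ × ℤ) : ℕ := sInf {n | near R r n u}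

lemma near_exists {R : Finset (ℤ × ℤ)} {r : ℤ × ℤ} (hconn : Conn R) (hr : r ∈ R)
    {u : ℤ × ℤ} (hu : u ∈ R) : ∃ n, near R r n u := by
  have h := hconn u hu r hr
  induction h using Relation.ReflTransGen.head_induction_on with
  | refl => exact ⟨0, rfl⟩
  | head hstep _ ih =>
    obtain ⟨n, hn⟩ := ih hstep.2.1
    exact ⟨n + 1, _, hstep.2.1, hstep.2.2, hn⟩

lemma dst_le {R : Finset (ℤ × ℤ)} {r u : ℤ × ℤ} {n : ℕ} (h : near R r n u) :
    dst R r u ≤ n := Nat.sInf_le h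

lemma near_dst {R : Finset (ℤ × ℤ)} {r u : ℤ × ℤ} (h : ∃ n, near R r n u) :
    near R r (dst R r u) u := Nat.sInf_mem h

lemma dst_self {R : Finset (ℤ × ℤ)} {r : ℤ × ℤ} : dst R r r = 0 :=
  Nat.le_zero.mp (dst_le (show near R r 0 r from rfl))

lemma dst_parent {R : Finset (ℤ × ℤ)} {r : ℤ × ℤ} (hconn : Conn R) (hr : r ∈ R)
    {u : ℤ × ℤ} (hu : u ∈ R) (hne : u ≠ r) :
    ∃ q ∈ R, Adj u q ∧ dst R r q + 1 = dst R r u := by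
  have hex := near_exists hconn hr hu
  have h := near_dst hex
  cases hd : dst R r u with
  | zero => rw [hd] at h; exact absurd h hne
  | succ n =>
    rw [hd] at h
    obtain ⟨q, hqR, hadj, hq⟩ := h
    refine ⟨q, hqR, hadj, ?_⟩
    have h1 : dst R r q ≤ n := dst_le hq
    have h2 : dst R r u ≤ dst R r q + 1 :=
      dst_le ⟨q, hqR, hadj, near_dst (near_exists hconn hr hqR)⟩
    omega

lemma conn_of_parents (B : Finset (ℤ × ℤ)) (r : ℤ × ℤ) (hr : r ∈ B) (f : ℤ × ℤ → ℕ)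
    (H : ∀ w ∈ B, w ≠ r → ∃ q ∈ B, Adj w q ∧ f q < f w) : Conn B := by
  have key : ∀ n, ∀ w ∈ B, f w ≤ n →
      Relation.ReflTransGen (fun x y => x ∈ B ∧ y ∈ B ∧ Adj x y) w r := by
    intro n
    induction n with
    | zero =>
      intro w hw hfw
      by_cases hwr : w = r
      · subst hwr; exact Relation.ReflTransGen.refl
      · obtain ⟨q, hq, hadj, hlt⟩ := H w hw hwr; omega
    | succ n ih =>
      intro w hw hfw
      by_cases hwr : w = r
      · subst hwr; exact Relation.ReflTransGen.refl
      · obtain ⟨q, hq, hadj, hlt⟩ := H w hw hwr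
        exact Relation.ReflTransGen.head ⟨hw, hq, hadj⟩ (ih q hq (by omega))
  intro a ha b hb
  have h1 := key (f a) a ha le_rfl
  have h2 := key (f b) b hb le_rfl
  have hsymm : Symmetric (fun x y : ℤ × ℤ => x ∈ B ∧ y ∈ B ∧ Adj x y) :=
    fun x y h => ⟨h.2.1, h.1, adj_symm h.2.2⟩
  exact h1.trans ((@Relation.ReflTransGen.symmetric _ _ ⟨fun a b h => hsymm h⟩).symm _ _ h2)

lemma subset_foldr {q : Finset (ℤ × ℤ)} :
    ∀ {l : List (Finset (ℤ × ℤ))}, q ∈ l → q ⊆ l.foldr (· ∪ ·) ∅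
  | a :: l, h => by
    rcases List.mem_cons.mp h with rfl | h
    · exact Finset.subset_union_left
    · exact (subset_foldr h).trans Finset.subset_union_right

lemma key_step (R : Finset (ℤ × ℤ)) (hconn : Conn R) (hcard : 2 ≤ R.card) :
    (∃ t ∈ S2, ∃ k < 4, ∃ v, R = placeR t k v) ∨
    ∃ A : Finset (ℤ × ℤ), A ⊆ R ∧ A.Nonempty ∧
      (∃ t ∈ S2, ∃ k < 4, ∃ v, A = placeR t k v) ∧
      Conn (R \ A) ∧ 2 ≤ (R \ A).card := by
  classical
  obtain ⟨r, hr⟩ : R.Nonempty := Finset.card_pos.mp (by omega)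
  obtain ⟨v, hv, hvmax⟩ := R.exists_max_image (dst R r) ⟨r, hr⟩
  by_cases hd1 : dst R r v ≤ 1
  · -- the whole region is within distance 1 of `r`: it is a single tile
    left
    have hc : R = insert r (R.erase r) := (Finset.insert_erase hr).symm
    rw [hc]
    apply center_tile
    · intro x hx
      have hxR : x ∈ R := Finset.mem_of_mem_erase hx
      have hxr : x ≠ r := Finset.ne_of_mem_erase hx
      have h := near_dst (near_exists hconn hr hxR)
      have hle : dst R r x ≤ 1 := le_trans (hvmax x hxR) hd1
      rcases Nat.le_one_iff_eq_zero_or_eq_one.mp hle with h0 | h0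
      · rw [h0] at h; exact absurd h hxr
      · rw [h0] at h
        obtain ⟨q, hqR, hadj, hq0⟩ := h
        have : q = r := hq0
        rwa [this] at hadj
    · rw [← Finset.card_pos, Finset.card_erase_of_mem hr]; omega
  · push_neg at hd1   -- 1 < dst R r v
    have hvr : v ≠ r := by
      rintro rfl; rw [dst_self] at hd1; omega
    obtain ⟨p, hpR, hvp, hp⟩ := dst_parent hconn hr hv hvr
    have hpr : p ≠ r := by
      rintro rfl; rw [dst_self] at hp; omega
    obtain ⟨g, hgR, hpg, hg⟩ := dst_parent hconn hr hpR hpr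
    set d := dst R r v with hd
    set C := R.filter (fun w => Adj w p ∧ dst R r w = d) with hC
    have hCsub : C ⊆ R := Finset.filter_subset _ _
    have hAsub : insert p C ⊆ R := Finset.insert_subset hpR hCsub
    have hvC : v ∈ C := Finset.mem_filter.mpr ⟨hv, hvp, rfl⟩
    have hshape : ∃ t ∈ S2, ∃ k < 4, ∃ vv, insert p C = placeR t k vv :=
      center_tile p C (fun x hx => (Finset.mem_filter.mp hx).2.1) ⟨v, hvC⟩
    have hrA : r ∉ insert p C := by
      intro h
      rcases Finset.mem_insert.mp h with rfl | hrC
      · exact hpr rfl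
      · have := (Finset.mem_filter.mp hrC).2.2
        rw [dst_self] at this; omega
    have hrRA : r ∈ R \ insert p C := Finset.mem_sdiff.mpr ⟨hr, hrA⟩
    have hpar : ∀ w ∈ R \ insert p C, w ≠ r →
        ∃ q ∈ R \ insert p C, Adj w q ∧ dst R r q < dst R r w := by
      intro w hw hwr
      obtain ⟨hwR, hwA⟩ := Finset.mem_sdiff.mp hw
      obtain ⟨q, hqR, hadj, hq⟩ := dst_parent hconn hr hwR hwr
      refine ⟨q, Finset.mem_sdiff.mpr ⟨hqR, ?_⟩, hadj, by omega⟩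
      intro hqA
      rcases Finset.mem_insert.mp hqA with rfl | hqC
      · -- the parent is `p` itself, so `w ∈ C`, contradiction
        have hwd : dst R r w = d := by
          have h1 : dst R r w ≤ d := hvmax w hwR
          omega
        exact hwA (Finset.mem_insert_of_mem
          (Finset.mem_filter.mpr ⟨hwR, hadj, hwd⟩))
      · have h1 := (Finset.mem_filter.mp hqC).2.2
        have h2 : dst R r w ≤ d := hvmax w hwR
        omega
    have hconn' : Conn (R \ insert p C) := conn_of_parents _ r hrRA (dst R r) hpar
    by_cases hsz : 2 ≤ (R \ insert p C).card
    · exact Or.inr ⟨insert p C, hAsub, ⟨p, Finset.mem_insert_self _ _⟩, hshape, hconn', hsz⟩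
    · -- the remainder is exactly `{r}` and `R` is a single tile centred at `p`
      left
      have hge : 1 ≤ (R \ insert p C).card := Finset.card_pos.mpr ⟨r, hrRA⟩
      have h1 : (R \ insert p C).card = 1 := by omega
      obtain ⟨a, ha⟩ := Finset.card_eq_one.mp h1
      have hra : r = a := by
        have := hrRA; rw [ha, Finset.mem_singleton] at this; exact this
      have hRA : R \ insert p C = {r} := by rw [ha, ← hra]
      have hgA : g ∉ insert p C := by
        intro h
        rcases Finset.mem_insert.mp h with rfl | hgC
        · omega
        · have := (Finset.mem_filter.mp hgC).2.2
          omega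
      have hgr : g = r := by
        have : g ∈ R \ insert p C := Finset.mem_sdiff.mpr ⟨hgR, hgA⟩
        rw [hRA, Finset.mem_singleton] at this; exact this
      have hR : R = insert p (insert r C) := by
        ext x
        constructor
        · intro hx
          by_cases hxA : x ∈ insert p C
          · rcases Finset.mem_insert.mp hxA with rfl | hxC
            · exact Finset.mem_insert_self _ _
            · exact Finset.mem_insert_of_mem (Finset.mem_insert_of_mem hxC)
          · have hx' : x ∈ R \ insert p C := Finset.mem_sdiff.mpr ⟨hx, hxA⟩
            rw [hRA, Finset.mem_singleton] at hx'
            rw [hx']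
            exact Finset.mem_insert_of_mem (Finset.mem_insert_self _ _)
        · intro hx
          rcases Finset.mem_insert.mp hx with rfl | hx
          · exact hpR
          rcases Finset.mem_insert.mp hx with rfl | hx
          · exact hr
          · exact hCsub hx
      rw [hR]
      apply center_tile
      · intro x hx
        rcases Finset.mem_insert.mp hx with rfl | hxC
        · exact adj_symm (hgr ▸ hpg)
        · exact (Finset.mem_filter.mp hxC).2.1
      · exact ⟨v, Finset.mem_insert_of_mem hvC⟩

/-- Every polyomino of size at least 2 can be tiled by
`S₂` = {domino, straight tromino, L-tromino, T-tetromino, plus-pentomino}, rotations allowed. -/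
theorem S2_tiles_everything (R : Finset (ℤ × ℤ)) (hconn : Conn R) (hcard : 2 ≤ R.card) :
    TileableR S2 R := by
  classical
  have H : ∀ n (R : Finset (ℤ × ℤ)), R.card ≤ n → Conn R → 2 ≤ R.card → TileableR S2 R := by
    intro n
    induction n with
    | zero => intro R h1 _ h2; omega
    | succ n ih =>
      intro R hle hconn hcard
      rcases key_step R hconn hcard with ⟨t, ht, k, hk, vv, hR⟩ |
        ⟨A, hAsub, hAne, hshape, hconn', hsz⟩
      · refine ⟨[R], ?_, ?_, ?_⟩
        · intro q hq
          rw [List.mem_singleton] at hq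
          subst hq
          exact ⟨t, ht, k, hk, vv, hR⟩
        · simp
        · simp
      · have hlt : (R \ A).card ≤ n := by
          have h1 := Finset.card_sdiff_of_subset hAsub
          have h2 : 1 ≤ A.card := Finset.card_pos.mpr hAne
          have h3 : A.card ≤ R.card := Finset.card_le_card hAsub
          omega
        obtain ⟨l, hl1, hl2, hl3⟩ := ih (R \ A) hlt hconn' hsz
        refine ⟨A :: l, ?_, ?_, ?_⟩
        · intro q hq
          rcases List.mem_cons.mp hq with rfl | hq
          · exact hshape
          · exact hl1 q hq
        · refine List.pairwise_cons.mpr ⟨?_, hl2⟩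
          intro q hq
          have hqsub : q ⊆ R \ A := hl3 ▸ subset_foldr hq
          exact Finset.disjoint_left.mpr
            (fun {x} hxA hxq => (Finset.mem_sdiff.mp (hqsub hxq)).2 hxA)
        · simp only [List.foldr_cons, hl3]
          exact Finset.union_sdiff_of_subset hAsub
  exact H R.card R le_rfl hconn hcard
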